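/- For every integer m ≥ 1, the identity ∂_j(∂_i^m(L_m)) = (1 − b)^m·(m)_a!·1 holds in T, where (t)_a = 1 + a + ⋯ + a^{t−1} and (m)_a! = ∏_{t=1}^m (t)_a. -/

import Mathlib

noncomputable section

/-- The `ℤⁿ`-degree of a word: the multidegree counting occurrences of each letter. -/
def degw {n : ℕ} (w : FreeMonoid (Fin n)) : Fin n → ℕ :=
  fun k => (FreeMonoid.toList w).count k

/-- The word `u` viewed as an element of the free algebra `T = F⟨x_1,…,x_n⟩`,
realized as the monoid algebra of the free monoid on `n` letters. -/
def wordOf (F : Type) [Field F] {n : ℕ} (u : FreeMonoid (Fin n)) :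
    MonoidAlgebra F (FreeMonoid (Fin n)) :=
  MonoidAlgebra.of F (FreeMonoid (Fin n)) u

/-- `x` is `ℤⁿ`-homogeneous of degree `d`: every word occurring in `x` has degree `d`. -/
def IsHomog (F : Type) [Field F] {n : ℕ}
    (x : MonoidAlgebra F (FreeMonoid (Fin n))) (d : Fin n → ℕ) : Prop :=
  ∀ w ∈ (x.coeff : FreeMonoid (Fin n) →₀ F).support, degw w = d

namespace StmtAux

variable {F : Type} [Field F] {n : ℕ}

lemma wordOf_eq_single (u : FreeMonoid (Fin n)) :
    wordOf F u = MonoidAlgebra.single u (1:F) := MonoidAlgebra.of_apply _ _ _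

lemma wordOf_mul (u v : FreeMonoid (Fin n)) :
    wordOf F (u * v) = wordOf F u * wordOf F v := map_mul _ _ _

lemma wordOf_one : wordOf F (1 : FreeMonoid (Fin n)) = 1 := map_one _

lemma support_wordOf (u : FreeMonoid (Fin n)) :
    ((wordOf F u).coeff : FreeMonoid (Fin n) →₀ F).support = {u} := by
  rw [wordOf_eq_single, MonoidAlgebra.coeff_single]; exact Finsupp.support_single_ne_zero _ one_ne_zero

lemma degw_mul (u v : FreeMonoid (Fin n)) (k : Fin n) :
    degw (u * v) k = degw u k + degw v k := by
  simp [degw, FreeMonoid.toList_mul, List.count_append]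

lemma degw_of (x k : Fin n) :
    degw (FreeMonoid.of x) k = if k = x then 1 else 0 := by
  have h0 : degw (FreeMonoid.of x) k = if x = k then 1 else 0 := by
    simp [degw, FreeMonoid.toList_of, List.count_cons, List.count_nil]
  rw [h0]
  by_cases h : x = k
  · rw [if_pos h, if_pos h.symm]
  · rw [if_neg h, if_neg fun hh => h hh.symm]

lemma homog_word (u : FreeMonoid (Fin n)) : IsHomog F (wordOf F u) (degw u) := by
  intro w hw
  rw [support_wordOf, Finset.mem_singleton] at hw
  rw [hw]

lemma homog_mul {x y : MonoidAlgebra F (FreeMonoid (Fin n))} {d e : Fin n → ℕ}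
    (hx : IsHomog F x d) (hy : IsHomog F y e) :
    IsHomog F (x * y) (fun k => d k + e k) := by
  classical
  intro w hw
  have := MonoidAlgebra.support_coeff_mul_subset x y hw
  rw [Finset.mem_mul] at this
  obtain ⟨u, hu, v, hv, rfl⟩ := this
  funext k
  rw [degw_mul, hx u hu, hy v hv]

lemma homog_sub {x y : MonoidAlgebra F (FreeMonoid (Fin n))} {d : Fin n → ℕ}
    (hx : IsHomog F x d) (hy : IsHomog F y d) : IsHomog F (x - y) d := by
  classical
  intro w hw
  have := Finsupp.support_sub (f := x.coeff) (g := y.coeff) hw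
  rw [Finset.mem_union] at this
  rcases this with h | h
  · exact hx w h
  · exact hy w h

lemma homog_ext {x : MonoidAlgebra F (FreeMonoid (Fin n))} {d d' : Fin n → ℕ}
    (hx : IsHomog F x d) (h : ∀ k, d k = d' k) : IsHomog F x d' := by
  intro w hw; rw [hx w hw]; funext k; exact h k

lemma single_eq_smul (w : FreeMonoid (Fin n)) (c : F) :
    MonoidAlgebra.single w c = c • wordOf F w := by
  rw [wordOf_eq_single, MonoidAlgebra.smul_single', mul_one]

lemma eq_sum_support (x : MonoidAlgebra F (FreeMonoid (Fin n))) :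
    x = ∑ w ∈ (x.coeff : FreeMonoid (Fin n) →₀ F).support, (x.coeff w) • wordOf F w := by
  conv_lhs => rw [← MonoidAlgebra.sum_coeff_single x]
  rw [Finsupp.sum]
  exact Finset.sum_congr rfl fun w _ => single_eq_smul w (x.coeff w)

end StmtAux

open StmtAux

/-- `∂_j(∂_i^m(L_m)) = (1 − b)^m (m)_a! · 1` for `m ≥ 1`, where
`a = q_{ii}⁻¹`, `b = q_{ij}⁻¹`, `(t)_a = 1 + a + ⋯ + a^{t−1}`, `(m)_a! = ∏_{t=1}^m (t)_a`,
`L_0 = x_j` and `L_m = x_i L_{m−1} − L_{m−1} x_i`. -/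
theorem stmt_3 (F : Type) [Field F] [CharZero F] (n : ℕ) (hn : 2 ≤ n)
    (q : Fin n → Fin n → F) (hq : ∀ k l, q k l ≠ 0)
    (D : Fin n → Module.End F (MonoidAlgebra F (FreeMonoid (Fin n))))
    (hD1 : ∀ i, D i 1 = 0)
    (hDx : ∀ i k : Fin n, D i (wordOf F (FreeMonoid.of k)) = if i = k then 1 else 0)
    (hDmul : ∀ (i : Fin n) (u v : MonoidAlgebra F (FreeMonoid (Fin n))) (d : Fin n → ℕ),
      IsHomog F u d →
      D i (u * v) = D i u * v + (∏ k : Fin n, (q i k)⁻¹ ^ d k) • (u * D i v))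
    (i j : Fin n) (hij : i ≠ j)
    (L : ℕ → MonoidAlgebra F (FreeMonoid (Fin n)))
    (hL0 : L 0 = wordOf F (FreeMonoid.of j))
    (hLs : ∀ m : ℕ, L (m + 1) =
      wordOf F (FreeMonoid.of i) * L m - L m * wordOf F (FreeMonoid.of i))
    (m : ℕ) (hm : 1 ≤ m) :
    D j ((D i ^ m) (L m)) =
      ((1 - (q i j)⁻¹) ^ m *
          ∏ t ∈ Finset.range m, ∑ l ∈ Finset.range (t + 1), (q i i)⁻¹ ^ l) •
        (1 : MonoidAlgebra F (FreeMonoid (Fin n))) := by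
  classical
  -- single-letter twist factor
  have factor1 : ∀ ι x : Fin n,
      (∏ k : Fin n, (q ι k)⁻¹ ^ (degw (FreeMonoid.of x) k)) = (q ι x)⁻¹ := by
    intro ι x
    have e : ∀ k : Fin n, (q ι k)⁻¹ ^ (degw (FreeMonoid.of x) k)
        = if k = x then (q ι k)⁻¹ else 1 := by
      intro k
      rw [degw_of]
      split_ifs <;> simp
    rw [Finset.prod_congr rfl fun k _ => e k, Finset.prod_ite_eq']
    simp
  -- twist factor for degrees (p, 1)
  have factor2 : ∀ p : ℕ,
      (∏ k : Fin n, (q i k)⁻¹ ^ ((if k = i then p else 0) + (if k = j then 1 else 0)))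
        = (q i i)⁻¹ ^ p * (q i j)⁻¹ := by
    intro p
    have e : ∀ k : Fin n, (q i k)⁻¹ ^ ((if k = i then p else 0) + (if k = j then 1 else 0))
        = (if k = i then (q i k)⁻¹ ^ p else 1) * (if k = j then (q i k)⁻¹ else 1) := by
      intro k
      rw [pow_add]
      congr 1 <;> split_ifs <;> simp
    rw [Finset.prod_congr rfl fun k _ => e k, Finset.prod_mul_distrib,
      Finset.prod_ite_eq', Finset.prod_ite_eq']
    simp
  -- derivative of a word split off its first letter
  have Dword : ∀ (ι x : Fin n) (w : FreeMonoid (Fin n)),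
      D ι (wordOf F (FreeMonoid.of x * w)) =
        (if ι = x then 1 else 0) * wordOf F w +
          (q ι x)⁻¹ • (wordOf F (FreeMonoid.of x) * D ι (wordOf F w)) := by
    intro ι x w
    rw [wordOf_mul, hDmul ι _ _ (degw (FreeMonoid.of x)) (homog_word _), hDx, factor1]
  -- supports of derivatives of words
  have DhomogW : ∀ (ι : Fin n) (w : FreeMonoid (Fin n)),
      ∀ v ∈ ((D ι (wordOf F w)).coeff : FreeMonoid (Fin n) →₀ F).support,
      ∀ k, degw v k + (if k = ι then 1 else 0) = degw w k := by
    intro ι w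
    induction w using FreeMonoid.recOn with
    | one =>
      rw [wordOf_one, hD1]
      intro v hv
      simp at hv
    | of_mul x xs ih =>
      intro v hv k
      rw [Dword ι x xs, MonoidAlgebra.coeff_add] at hv
      have := Finsupp.support_add hv
      rw [Finset.mem_union] at this
      rcases this with h | h
      · by_cases hx : ι = x
        · rw [if_pos hx, one_mul] at h
          rw [support_wordOf, Finset.mem_singleton] at h
          subst h
          subst hx
          rw [degw_mul, degw_of]
          split_ifs <;> omega
        · rw [if_neg hx, zero_mul] at h
          simp at h
      · rw [MonoidAlgebra.coeff_smul] at h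
        have h2 := Finsupp.support_smul h
        have h3 := MonoidAlgebra.support_coeff_mul_subset _ _ h2
        rw [Finset.mem_mul] at h3
        obtain ⟨u, hu, v', hv', rfl⟩ := h3
        rw [support_wordOf, Finset.mem_singleton] at hu
        subst hu
        have := ih v' hv' k
        rw [degw_mul, degw_mul]
        omega
  -- homogeneity preservation by D
  have Dhomog : ∀ (ι : Fin n) (x : MonoidAlgebra F (FreeMonoid (Fin n))) (d : Fin n → ℕ),
      IsHomog F x d →
      ∀ v ∈ ((D ι x).coeff : FreeMonoid (Fin n) →₀ F).support,
      ∀ k, degw v k + (if k = ι then 1 else 0) = d k := by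
    intro ι x d hx v hv k
    rw [eq_sum_support x, map_sum, MonoidAlgebra.coeff_sum] at hv
    have := Finsupp.support_finset_sum hv
    rw [Finset.mem_biUnion] at this
    obtain ⟨w, hw, hvw⟩ := this
    rw [map_smul, MonoidAlgebra.coeff_smul] at hvw
    have hvw2 := Finsupp.support_smul hvw
    have := DhomogW ι w v hvw2 k
    rw [hx w hw] at this
    exact this
  -- homogeneity of L m
  have homogL : ∀ m : ℕ, IsHomog F (L m)
      (fun k => (if k = i then m else 0) + (if k = j then 1 else 0)) := by
    intro m
    induction m with
    | zero =>
      rw [hL0]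
      refine homog_ext (homog_word _) ?_
      intro k
      rw [degw_of]
      split_ifs <;> omega
    | succ m ih =>
      rw [hLs m]
      refine homog_sub (homog_ext (homog_mul (homog_word _) ih) ?_)
        (homog_ext (homog_mul ih (homog_word _)) ?_) <;> intro k <;>
        rw [degw_of] <;> split_ifs <;> omega
  -- iterated derivative unfolding
  have hpow : ∀ (k : ℕ) (x : MonoidAlgebra F (FreeMonoid (Fin n))),
      (D i ^ (k+1)) x = D i ((D i ^ k) x) := by
    intro k x
    rw [pow_succ', Module.End.mul_apply]
  -- homogeneity of iterated derivatives of L m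
  have homogU : ∀ m k : ℕ, k ≤ m → IsHomog F ((D i ^ k) (L m))
      (fun k' => (if k' = i then m - k else 0) + (if k' = j then 1 else 0)) := by
    intro m k
    induction k with
    | zero =>
      intro _
      have h0 : (D i ^ 0) (L m) = L m := by rw [pow_zero]; rfl
      rw [h0]
      exact homog_ext (homogL m) fun k => by rw [Nat.sub_zero]
    | succ k ihk =>
      intro hk
      have hk' : k ≤ m := by omega
      have H := Dhomog i _ _ (ihk hk')
      intro v hv
      rw [hpow] at hv
      funext k'
      have hH := H v hv k'
      split_ifs at hH ⊢ <;> omega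
  -- basic derivative values
  have DX : D i (wordOf F (FreeMonoid.of i)) = 1 := by rw [hDx, if_pos rfl]
  have DjY : D j (wordOf F (FreeMonoid.of j)) = 1 := by rw [hDx, if_pos rfl]
  have DiY : D i (wordOf F (FreeMonoid.of j)) = 0 := by rw [hDx, if_neg hij]
  -- Leibniz specializations
  have DmulX : ∀ u, D i (wordOf F (FreeMonoid.of i) * u)
      = u + (q i i)⁻¹ • (wordOf F (FreeMonoid.of i) * D i u) := by
    intro u
    rw [hDmul i _ u (degw (FreeMonoid.of i)) (homog_word _), DX, one_mul, factor1]
  have DmulR : ∀ m k : ℕ, k ≤ m →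
      D i ((D i ^ k) (L m) * wordOf F (FreeMonoid.of i)) =
        (D i ^ (k+1)) (L m) * wordOf F (FreeMonoid.of i) +
          ((q i i)⁻¹ ^ (m - k) * (q i j)⁻¹) • ((D i ^ k) (L m)) := by
    intro m k hk
    rw [hDmul i _ _ _ (homogU m k hk), factor2, DX, mul_one, hpow]
  -- the key recursion
  have step : ∀ m k : ℕ, k ≤ m →
      (D i ^ (k+1)) (L (m+1)) =
        ((∑ l ∈ Finset.range (k+1), (q i i)⁻¹ ^ l)
            * (1 - (q i i)⁻¹ ^ (m-k) * (q i j)⁻¹)) • ((D i ^ k) (L m))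
        + (q i i)⁻¹ ^ (k+1) • (wordOf F (FreeMonoid.of i) * (D i ^ (k+1)) (L m))
        - ((D i ^ (k+1)) (L m)) * wordOf F (FreeMonoid.of i) := by
    intro m k
    induction k with
    | zero =>
      intro _
      have e0 : (D i ^ 0) (L m) = L m := by simp
      have e1 : ∀ x : MonoidAlgebra F (FreeMonoid (Fin n)), (D i ^ 1) x = D i x := by
        intro x; rw [pow_one]
      rw [e1, hLs m, map_sub, DmulX (L m),
        hDmul i (L m) _ _ (homogL m), DX, mul_one, factor2, e0, e1]
      have hone : (∑ l ∈ Finset.range 1, (q i i)⁻¹ ^ l) = 1 := by simp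
      rw [hone, Nat.sub_zero, pow_one]
      module
    | succ k ihk =>
      intro hk
      have hk' : k ≤ m := by omega
      have happ := congrArg (D i) (ihk hk')
      rw [map_sub, map_add, map_smul, map_smul,
        DmulX ((D i ^ (k+1)) (L m)), DmulR m (k+1) hk,
        ← hpow k (L m), ← hpow (k+1) (L m), ← hpow (k+1) (L (m+1))] at happ
      rw [happ]
      rw [show (q i i)⁻¹ ^ (k+1+1) = (q i i)⁻¹ ^ (k+1) * (q i i)⁻¹ from pow_succ _ _]
      have hsub : m - k = (m - (k+1)) + 1 := by omega
      have hgs : (∑ l ∈ Finset.range (k+1+1), (q i i)⁻¹ ^ l)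
          = (q i i)⁻¹ * (∑ l ∈ Finset.range (k+1), (q i i)⁻¹ ^ l) + 1 := geom_sum_succ
      have hA : (q i i)⁻¹ ^ (k+1)
          = (q i i)⁻¹ * (∑ l ∈ Finset.range (k+1), (q i i)⁻¹ ^ l) + 1
            - (∑ l ∈ Finset.range (k+1), (q i i)⁻¹ ^ l) := by
        have h1 : (∑ l ∈ Finset.range (k+1+1), (q i i)⁻¹ ^ l)
            = (q i i)⁻¹ * (∑ l ∈ Finset.range (k+1), (q i i)⁻¹ ^ l) + 1 := geom_sum_succ
        have h2 : (∑ l ∈ Finset.range (k+1+1), (q i i)⁻¹ ^ l)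
            = (q i i)⁻¹ ^ (k+1) + (∑ l ∈ Finset.range (k+1), (q i i)⁻¹ ^ l) := geom_sum_succ'
        linear_combination h1 - h2
      rw [hsub, hgs, hA]
      module
  -- closed form for the m-th derivative
  have key : ∀ m : ℕ, (D i ^ m) (L m) =
      ((1 - (q i j)⁻¹) ^ m *
        ∏ t ∈ Finset.range m, ∑ l ∈ Finset.range (t + 1), (q i i)⁻¹ ^ l) •
        wordOf F (FreeMonoid.of j) := by
    intro m
    induction m with
    | zero => simp [hL0]
    | succ m ih =>
      have hz : (D i ^ (m+1)) (L m) = 0 := by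
        rw [hpow, ih, map_smul, DiY, smul_zero]
      have hs := step m m le_rfl
      rw [hz, mul_zero, smul_zero, add_zero, zero_mul, sub_zero,
        Nat.sub_self, pow_zero] at hs
      rw [hs, ih, smul_smul]
      congr 1
      rw [Finset.prod_range_succ]
      ring
  rw [key m, map_smul, DjY]


end
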